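/- Let n ≥ 1, let p be an integer with 1 ≤ p ≤ n, and let A be an n×n real matrix all of whose entries are integers. Then the associated over-approximation sequence (D_p^k)_{k≥1} stabilizes after finitely many steps: there exists K ≥ 1 such that D_p^k = D_p^K for all k ≥ K. -/

import Mathlib

/-- `MinMaxValue(F | p, n+1−p)`: the minimum over all pairs `(S₁, S₂)` of subsets of
`{1,…,n}` with `|S₁| = p` and `|S₂| = n+1−p` of `max_{(i,j) ∈ S₁×S₂} F i j`, where the
entries lie in `ℝ ∪ {−∞}` (modeled as `WithBot ℝ`). -/
noncomputable def minMaxValue {n : ℕ} (p : ℕ) (F : Fin n → Fin n → WithBot ℝ) : WithBot ℝ :=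
  sInf {v : WithBot ℝ | ∃ S₁ S₂ : Finset (Fin n), S₁.card = p ∧ S₂.card = n + 1 - p ∧
    v = (S₁ ×ˢ S₂).sup (fun q => F q.1 q.2)}

/-- The over-approximation sequence `(D_p^k)_{k ≥ 0}` associated with `A`: `D_p^0` is the
max-plus identity matrix and
`D_p^{k+1}(i,j) = MinMaxValue((l,m) ↦ A i l − A j m + D_p^k l m | p, n+1−p)`. -/
noncomputable def Dseq {n : ℕ} (A : Fin n → Fin n → ℝ) (p : ℕ) :
    ℕ → Fin n → Fin n → WithBot ℝ
  | 0 => fun i j => if i = j then 0 else ⊥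
  | (k + 1) => fun i j =>
      minMaxValue p (fun l m => ((A i l - A j m : ℝ) : WithBot ℝ) + Dseq A p k l m)

/-- The zone of a DBM `D` over `ℝ ∪ {−∞}`: all real vectors `x` with
`x i − x j ≥ D i j` for all `i, j`. -/
def zone {n : ℕ} (D : Fin n → Fin n → WithBot ℝ) : Set (Fin n → ℝ) :=
  {x | ∀ i j, D i j ≤ ((x i - x j : ℝ) : WithBot ℝ)}

open Finset

section Aux

variable {n p : ℕ}

/-- The defining set of `minMaxValue`. -/
def mmSet {n : ℕ} (p : ℕ) (F : Fin n → Fin n → WithBot ℝ) : Set (WithBot ℝ) :=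
  {v : WithBot ℝ | ∃ S₁ S₂ : Finset (Fin n), S₁.card = p ∧ S₂.card = n + 1 - p ∧
    v = (S₁ ×ˢ S₂).sup (fun q => F q.1 q.2)}

lemma minMaxValue_def (F : Fin n → Fin n → WithBot ℝ) :
    minMaxValue p F = sInf (mmSet p F) := rfl

lemma mmSet_finite (F : Fin n → Fin n → WithBot ℝ) : (mmSet p F).Finite := by
  classical
  apply Set.Finite.subset (Set.finite_range
    (fun q : Finset (Fin n) × Finset (Fin n) => (q.1 ×ˢ q.2).sup (fun r => F r.1 r.2)))
  rintro v ⟨S₁, S₂, -, -, rfl⟩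
  exact ⟨(S₁, S₂), rfl⟩

lemma mmSet_nonempty (hp1 : 1 ≤ p) (hpn : p ≤ n) (F : Fin n → Fin n → WithBot ℝ) :
    (mmSet p F).Nonempty := by
  classical
  obtain ⟨S₁, -, h1⟩ := Finset.exists_subset_card_eq
    (show p ≤ (univ : Finset (Fin n)).card by simpa using hpn)
  obtain ⟨S₂, -, h2⟩ := Finset.exists_subset_card_eq
    (show n + 1 - p ≤ (univ : Finset (Fin n)).card by simp; omega)
  exact ⟨_, S₁, S₂, h1, h2, rfl⟩

lemma minMaxValue_le (F : Fin n → Fin n → WithBot ℝ) {S₁ S₂ : Finset (Fin n)}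
    (h1 : S₁.card = p) (h2 : S₂.card = n + 1 - p) :
    minMaxValue p F ≤ (S₁ ×ˢ S₂).sup (fun q => F q.1 q.2) :=
  csInf_le (OrderBot.bddBelow _) ⟨S₁, S₂, h1, h2, rfl⟩

lemma le_minMaxValue (hp1 : 1 ≤ p) (hpn : p ≤ n) (F : Fin n → Fin n → WithBot ℝ)
    {c : WithBot ℝ}
    (h : ∀ S₁ S₂ : Finset (Fin n), S₁.card = p → S₂.card = n + 1 - p →
      c ≤ (S₁ ×ˢ S₂).sup (fun q => F q.1 q.2)) :
    c ≤ minMaxValue p F := by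
  refine le_csInf (mmSet_nonempty hp1 hpn F) ?_
  rintro b ⟨S₁, S₂, h1, h2, rfl⟩
  exact h S₁ S₂ h1 h2

lemma minMaxValue_mem (hp1 : 1 ≤ p) (hpn : p ≤ n) (F : Fin n → Fin n → WithBot ℝ) :
    ∃ S₁ S₂ : Finset (Fin n), S₁.card = p ∧ S₂.card = n + 1 - p ∧
      minMaxValue p F = (S₁ ×ˢ S₂).sup (fun q => F q.1 q.2) := by
  classical
  have hne := mmSet_nonempty hp1 hpn F
  have hf := mmSet_finite (p := p) F
  have h1 : hf.toFinset.Nonempty := by simpa using hne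
  have hmem : hf.toFinset.min' h1 ∈ mmSet p F := by simpa using hf.toFinset.min'_mem h1
  have heq : sInf (mmSet p F) = hf.toFinset.min' h1 := by
    refine le_antisymm (csInf_le (OrderBot.bddBelow _) hmem) ?_
    exact le_csInf hne fun b hb => hf.toFinset.min'_le b (by simpa using hb)
  obtain ⟨S₁, S₂, hS1, hS2, hv⟩ := hmem
  exact ⟨S₁, S₂, hS1, hS2, by rw [minMaxValue_def, heq, hv]⟩

lemma minMaxValue_mono (hp1 : 1 ≤ p) (hpn : p ≤ n) {F G : Fin n → Fin n → WithBot ℝ}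
    (h : ∀ l m, F l m ≤ G l m) : minMaxValue p F ≤ minMaxValue p G := by
  refine le_csInf (mmSet_nonempty hp1 hpn G) ?_
  rintro b ⟨S₁, S₂, h1, h2, rfl⟩
  exact (minMaxValue_le F h1 h2).trans (Finset.sup_mono_fun fun q _ => h q.1 q.2)

lemma exists_mem_inter (hpn : p ≤ n) {S₁ S₂ : Finset (Fin n)}
    (h1 : S₁.card = p) (h2 : S₂.card = n + 1 - p) : ∃ l, l ∈ S₁ ∧ l ∈ S₂ := by
  classical
  have hu := Finset.card_union_add_card_inter S₁ S₂
  have hle : (S₁ ∪ S₂).card ≤ n := by simpa using Finset.card_le_univ (S₁ ∪ S₂)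
  have : 0 < (S₁ ∩ S₂).card := by omega
  obtain ⟨l, hl⟩ := Finset.card_pos.1 this
  exact ⟨l, Finset.mem_inter.1 hl⟩

/-- entries are integers or `⊥`. -/
def IsIntB (v : WithBot ℝ) : Prop := v = ⊥ ∨ ∃ z : ℤ, v = ((z : ℝ) : WithBot ℝ)

lemma isIntB_sup {α : Type*} (s : Finset α) (f : α → WithBot ℝ)
    (hf : ∀ q ∈ s, IsIntB (f q)) : IsIntB (s.sup f) := by
  refine Finset.sup_induction (Or.inl rfl) ?_ hf
  intro a ha b hb
  rcases le_total a b with h | h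
  · rwa [sup_eq_right.2 h]
  · rwa [sup_eq_left.2 h]

end Aux

/-- For a matrix `A` with integer entries, the sequence `(D_p^k)_{k ≥ 1}` stabilizes after
finitely many steps. -/
theorem Dseq_stabilizes (n p : ℕ) (hn : 1 ≤ n) (hp1 : 1 ≤ p) (hpn : p ≤ n)
    (A : Fin n → Fin n → ℝ) (hA : ∀ i j, ∃ z : ℤ, A i j = (z : ℝ)) :
    ∃ K : ℕ, 1 ≤ K ∧ ∀ k : ℕ, K ≤ k → Dseq A p k = Dseq A p K := by
  classical
  set M : ℝ := ∑ i : Fin n, ∑ j : Fin n, |A i j| with hMdef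
  have hM : ∀ i j, |A i j| ≤ M := by
    intro i j
    have h1 : |A i j| ≤ ∑ j' : Fin n, |A i j'| :=
      Finset.single_le_sum (f := fun j' => |A i j'|) (fun _ _ => abs_nonneg _) (mem_univ j)
    have h2 : ∑ j' : Fin n, |A i j'| ≤ M :=
      Finset.single_le_sum (f := fun i => ∑ j' : Fin n, |A i j'|)
        (fun _ _ => Finset.sum_nonneg fun _ _ => abs_nonneg _) (mem_univ i)
    linarith
  -- monotonicity in k
  have step_mono : ∀ k, ∀ i j, Dseq A p k i j ≤ Dseq A p (k + 1) i j := by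
    intro k
    induction k with
    | zero =>
      intro i j
      by_cases hij : i = j
      · subst hij
        simp only [Dseq, if_pos rfl]
        refine le_minMaxValue hp1 hpn _ ?_
        intro S₁ S₂ h1 h2
        obtain ⟨l, hl1, hl2⟩ := exists_mem_inter hpn h1 h2
        have hmem : (l, l) ∈ S₁ ×ˢ S₂ := Finset.mem_product.2 ⟨hl1, hl2⟩
        have := Finset.le_sup (f := fun q : Fin n × Fin n =>
          ((A i q.1 - A i q.2 : ℝ) : WithBot ℝ) + Dseq A p 0 q.1 q.2) hmem
        simpa [Dseq, sub_self] using this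
      · simp [Dseq, hij]
    | succ k ih =>
      intro i j
      simp only [Dseq]
      exact minMaxValue_mono hp1 hpn fun l m => add_le_add_right (ih l m) _
  have chain : ∀ k₁ k₂, k₁ ≤ k₂ → ∀ i j, Dseq A p k₁ i j ≤ Dseq A p k₂ i j := by
    intro k₁ k₂ h
    induction h with
    | refl => intro i j; exact le_rfl
    | step h ih => exact fun i j => (ih i j).trans (step_mono _ i j)
  -- integrality
  have hint : ∀ k i j, IsIntB (Dseq A p k i j) := by
    intro k
    induction k with
    | zero =>
      intro i j
      by_cases hij : i = j
      · exact Or.inr ⟨0, by simp [Dseq, hij]⟩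
      · exact Or.inl (by simp [Dseq, hij])
    | succ k ih =>
      intro i j
      obtain ⟨S₁, S₂, h1, h2, heq⟩ := minMaxValue_mem hp1 hpn
        (fun l m => ((A i l - A j m : ℝ) : WithBot ℝ) + Dseq A p k l m)
      simp only [Dseq]
      rw [heq]
      refine isIntB_sup _ _ ?_
      rintro ⟨l, m⟩ -
      obtain ⟨z₁, hz₁⟩ := hA i l
      obtain ⟨z₂, hz₂⟩ := hA j m
      rcases ih l m with h | ⟨z, hz⟩
      · exact Or.inl (by simp [h])
      · refine Or.inr ⟨z₁ - z₂ + z, ?_⟩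
        simp only [hz]
        rw [← WithBot.coe_add]
        congr 1
        push_cast [hz₁, hz₂]
        ring
  -- the key construction: over-approximating vectors
  have key_step : ∀ k (y : Fin n → ℝ),
      (∀ i j, Dseq A p k i j ≤ ((y i - y j : ℝ) : WithBot ℝ)) →
      ∃ y' : Fin n → ℝ,
        (∀ i j, Dseq A p (k + 1) i j ≤ ((y' i - y' j : ℝ) : WithBot ℝ)) ∧
        (∀ i j, y' i - y' j ≤ 2 * M) := by
    intro k y hy
    set 𝒮 : Finset (Finset (Fin n)) := Finset.powersetCard p univ with h𝒮def
    have h𝒮card : ∀ S ∈ 𝒮, S.card = p := fun S hS => (Finset.mem_powersetCard_univ).1 hS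
    have h𝒮ne : 𝒮.Nonempty := by
      obtain ⟨S, -, hS⟩ := Finset.exists_subset_card_eq
        (show p ≤ (univ : Finset (Fin n)).card by simpa using hpn)
      exact ⟨S, Finset.mem_powersetCard_univ.2 hS⟩
    have hSne : ∀ S ∈ 𝒮, S.Nonempty := by
      intro S hS
      refine Finset.card_pos.1 ?_
      rw [h𝒮card S hS]; omega
    set gS : Fin n → Finset (Fin n) → ℝ := fun i S =>
      if h : S.Nonempty then S.sup' h (fun l => A i l + y l) else 0 with hgSdef
    have hgS : ∀ i S (h : S.Nonempty), gS i S = S.sup' h (fun l => A i l + y l) := by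
      intro i S h; simp [hgSdef, dif_pos h]
    set g : Fin n → ℝ := fun i => 𝒮.inf' h𝒮ne (gS i) with hgdef
    have hattain : ∀ i, ∃ S ∈ 𝒮, g i = gS i S := fun i =>
      Finset.exists_mem_eq_inf' h𝒮ne (gS i)
    have hle : ∀ i, ∀ S ∈ 𝒮, g i ≤ gS i S := fun i S hS => Finset.inf'_le _ hS
    -- the "many large entries" set
    have hT : ∀ j, n + 1 - p ≤ (univ.filter (fun m => g j ≤ A j m + y m)).card := by
      intro j
      by_contra h'
      push_neg at h'
      have hsplit := Finset.card_filter_add_card_filter_not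
        (s := (univ : Finset (Fin n))) (p := fun m => g j ≤ A j m + y m)
      simp only [Finset.card_univ, Fintype.card_fin] at hsplit
      have hbig : p ≤ (univ.filter (fun m => ¬ g j ≤ A j m + y m)).card := by omega
      obtain ⟨S, hSsub, hScard⟩ := Finset.exists_subset_card_eq hbig
      have hSmem : S ∈ 𝒮 := Finset.mem_powersetCard_univ.2 hScard
      have hSne' : S.Nonempty := hSne S hSmem
      have hlt : gS j S < g j := by
        rw [hgS j S hSne']
        refine (Finset.sup'_lt_iff hSne').2 ?_
        intro l hl
        have := hSsub hl
        simp only [Finset.mem_filter] at this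
        exact not_le.1 this.2
      exact absurd (hle j S hSmem) (not_le.2 hlt)
    refine ⟨g, ?_, ?_⟩
    · intro i j
      obtain ⟨S₁, hS₁m, hgi⟩ := hattain i
      obtain ⟨S₂, hS₂sub, hS₂card⟩ := Finset.exists_subset_card_eq (hT j)
      have hle1 : Dseq A p (k + 1) i j ≤ (S₁ ×ˢ S₂).sup
          (fun q => ((A i q.1 - A j q.2 : ℝ) : WithBot ℝ) + Dseq A p k q.1 q.2) := by
        simp only [Dseq]
        exact minMaxValue_le _ (h𝒮card S₁ hS₁m) hS₂card
      refine hle1.trans ?_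
      refine Finset.sup_le ?_
      rintro ⟨l, m⟩ hq
      obtain ⟨hl, hm⟩ := Finset.mem_product.1 hq
      have h1 : A i l + y l ≤ g i := by
        rw [hgi, hgS i S₁ (hSne S₁ hS₁m)]
        exact Finset.le_sup' (fun l => A i l + y l) hl
      have h2 : g j ≤ A j m + y m := by
        have := hS₂sub hm
        simp only [Finset.mem_filter] at this
        exact this.2
      calc ((A i l - A j m : ℝ) : WithBot ℝ) + Dseq A p k l m
          ≤ ((A i l - A j m : ℝ) : WithBot ℝ) + ((y l - y m : ℝ) : WithBot ℝ) :=
            add_le_add_right (hy l m) _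
        _ = (((A i l + y l) - (A j m + y m) : ℝ) : WithBot ℝ) := by
            rw [← WithBot.coe_add]; congr 1; ring
        _ ≤ ((g i - g j : ℝ) : WithBot ℝ) := WithBot.coe_le_coe.2 (by linarith)
    · intro i j
      obtain ⟨S, hSm, hgj⟩ := hattain j
      have hSne' : S.Nonempty := hSne S hSm
      have h1 : g i ≤ S.sup' hSne' (fun l => A i l + y l) := by
        rw [← hgS i S hSne']; exact hle i S hSm
      obtain ⟨l₁, hl₁, hmax⟩ := Finset.exists_mem_eq_sup' hSne' (fun l => A i l + y l)
      have h2 : g i ≤ A i l₁ + y l₁ := by rw [← hmax]; exact h1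
      have h3 : A j l₁ + y l₁ ≤ g j := by
        rw [hgj, hgS j S hSne']
        exact Finset.le_sup' (fun l => A j l + y l) hl₁
      have h4 := hM i l₁
      have h5 := hM j l₁
      rw [abs_le] at h4 h5
      linarith [h4.1, h4.2, h5.1, h5.2]
  have exists_y : ∀ k, ∃ y : Fin n → ℝ,
      ∀ i j, Dseq A p k i j ≤ ((y i - y j : ℝ) : WithBot ℝ) := by
    intro k
    induction k with
    | zero =>
      refine ⟨fun _ => 0, fun i j => ?_⟩
      by_cases hij : i = j <;> simp [Dseq, hij]
    | succ k ih =>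
      obtain ⟨y, hy⟩ := ih
      obtain ⟨y', hy', -⟩ := key_step k y hy
      exact ⟨y', hy'⟩
  have hub : ∀ k, 1 ≤ k → ∀ i j, Dseq A p k i j ≤ ((2 * M : ℝ) : WithBot ℝ) := by
    intro k hk i j
    obtain ⟨k', rfl⟩ := Nat.exists_eq_add_of_le hk
    obtain ⟨y, hy⟩ := exists_y k'
    obtain ⟨y', hy', hb⟩ := key_step k' y hy
    have : Dseq A p (k' + 1) i j ≤ ((y' i - y' j : ℝ) : WithBot ℝ) := hy' i j
    rw [show 1 + k' = k' + 1 by ring]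
    exact this.trans (WithBot.coe_le_coe.2 (hb i j))
  -- lower bound at k = 1, hence no ⊥ entries for k ≥ 1
  have hlb1 : ∀ i j, ((-(2 * M) : ℝ) : WithBot ℝ) ≤ Dseq A p 1 i j := by
    intro i j
    show ((-(2 * M) : ℝ) : WithBot ℝ) ≤ Dseq A p (0 + 1) i j
    simp only [Dseq]
    refine le_minMaxValue hp1 hpn _ ?_
    intro S₁ S₂ h1 h2
    obtain ⟨l, hl1, hl2⟩ := exists_mem_inter hpn h1 h2
    have hmem : (l, l) ∈ S₁ ×ˢ S₂ := Finset.mem_product.2 ⟨hl1, hl2⟩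
    have hsup := Finset.le_sup (f := fun q : Fin n × Fin n =>
      ((A i q.1 - A j q.2 : ℝ) : WithBot ℝ) + Dseq A p 0 q.1 q.2) hmem
    refine le_trans ?_ hsup
    have h4 := hM i l
    have h5 := hM j l
    rw [abs_le] at h4 h5
    have : ((A i l - A j l : ℝ) : WithBot ℝ) + Dseq A p 0 l l
        = ((A i l - A j l : ℝ) : WithBot ℝ) := by simp [Dseq]
    show ((-(2 * M) : ℝ) : WithBot ℝ) ≤ ((A i l - A j l : ℝ) : WithBot ℝ) + Dseq A p 0 l l
    rw [this]
    exact WithBot.coe_le_coe.2 (by linarith [h4.1, h4.2, h5.1, h5.2])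
  have hbot : ∀ k, 1 ≤ k → ∀ i j, Dseq A p k i j ≠ ⊥ := by
    intro k hk i j heq
    have h := (hlb1 i j).trans (chain 1 k hk i j)
    rw [heq, le_bot_iff] at h
    exact WithBot.coe_ne_bot h
  -- integer value extraction
  have hz : ∀ k, 1 ≤ k → ∀ i j, ∃ z : ℤ, Dseq A p k i j = ((z : ℝ) : WithBot ℝ) := by
    intro k hk i j
    rcases hint k i j with h | h
    · exact absurd h (hbot k hk i j)
    · exact h
  -- the integer sum
  set s : ℕ → ℤ := fun k => ∑ q : Fin n × Fin n, ⌊WithBot.unbotD 0 (Dseq A p k q.1 q.2)⌋ with hsdef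
  have hfloor : ∀ k (i j : Fin n) (z : ℤ), Dseq A p k i j = ((z : ℝ) : WithBot ℝ) →
      ⌊WithBot.unbotD 0 (Dseq A p k i j)⌋ = z := by
    intro k i j z h
    rw [h, WithBot.unbotD_coe, Int.floor_intCast]
  set C : ℤ := ∑ _q : Fin n × Fin n, ⌊2 * M⌋ with hCdef
  have hsC : ∀ k, 1 ≤ k → s k ≤ C := by
    intro k hk
    refine Finset.sum_le_sum ?_
    rintro ⟨i, j⟩ -
    obtain ⟨z, hzeq⟩ := hz k hk i j
    rw [hfloor k i j z hzeq]
    refine Int.le_floor.2 ?_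
    have := hub k hk i j
    rw [hzeq, WithBot.coe_le_coe] at this
    exact this
  have hsmono : ∀ k, 1 ≤ k → ∀ i j, ⌊WithBot.unbotD 0 (Dseq A p k i j)⌋ ≤ ⌊WithBot.unbotD 0 (Dseq A p (k+1) i j)⌋ := by
    intro k hk i j
    obtain ⟨z, hzeq⟩ := hz k hk i j
    obtain ⟨z', hzeq'⟩ := hz (k+1) (by omega) i j
    rw [hfloor k i j z hzeq, hfloor (k+1) i j z' hzeq']
    have := step_mono k i j
    rw [hzeq, hzeq', WithBot.coe_le_coe] at this
    exact_mod_cast this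
  have hstrict : ∀ k, 1 ≤ k → Dseq A p (k + 1) ≠ Dseq A p k → s k < s (k + 1) := by
    intro k hk hne
    have hex : ∃ q : Fin n × Fin n, Dseq A p (k+1) q.1 q.2 ≠ Dseq A p k q.1 q.2 := by
      by_contra hall
      push_neg at hall
      exact hne (funext fun i => funext fun j => hall (i, j))
    obtain ⟨q₀, hq₀⟩ := hex
    refine Finset.sum_lt_sum (fun q _ => hsmono k hk q.1 q.2) ⟨q₀, mem_univ q₀, ?_⟩
    obtain ⟨z, hzeq⟩ := hz k hk q₀.1 q₀.2
    obtain ⟨z', hzeq'⟩ := hz (k+1) (by omega) q₀.1 q₀.2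
    rw [hfloor k q₀.1 q₀.2 z hzeq, hfloor (k+1) q₀.1 q₀.2 z' hzeq']
    have hle := step_mono k q₀.1 q₀.2
    rw [hzeq, hzeq', WithBot.coe_le_coe] at hle
    have hne' : (z : ℝ) ≠ (z' : ℝ) := by
      intro h
      apply hq₀
      rw [hzeq, hzeq', h]
    have : (z : ℝ) < z' := lt_of_le_of_ne hle hne'
    exact_mod_cast this
  -- find a fixed point
  have hfix : ∃ K, 1 ≤ K ∧ Dseq A p (K + 1) = Dseq A p K := by
    by_contra hcon
    push_neg at hcon
    have hne : ∀ K, 1 ≤ K → Dseq A p (K + 1) ≠ Dseq A p K := fun K hK => hcon K hK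
    have hgrow : ∀ t : ℕ, s 1 + t ≤ s (1 + t) := by
      intro t
      induction t with
      | zero => simp
      | succ t ih =>
        have h1 : s (1 + t) < s (1 + t + 1) := hstrict (1 + t) (by omega) (hne (1 + t) (by omega))
        have : (1 + (t + 1)) = (1 + t + 1) := by ring
        rw [this]
        push_cast
        omega
    have h1 := hgrow (C - s 1 + 1).toNat
    have h2 := hsC (1 + (C - s 1 + 1).toNat) (by omega)
    have h3 : (C - s 1 + 1) ≤ ((C - s 1 + 1).toNat : ℤ) := Int.self_le_toNat _
    omega
  obtain ⟨K, hK1, hKfix⟩ := hfix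
  refine ⟨K, hK1, ?_⟩
  intro k hk
  induction k, hk using Nat.le_induction with
  | base => rfl
  | succ k hk ih =>
    have h2 : Dseq A p (k + 1) = Dseq A p (K + 1) := by
      funext i j
      simp only [Dseq, ih]
    rw [h2, hKfix]
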